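/- For λ > 0 and r > 0, ∫_r^∞ ∫_0^r ((r + r₁)/(r₁ + r₂))·8λ²·exp(-2λ(r₁+r₂)) dr₁ dr₂ = exp(-2λr) + 2λr·exp(-2λr) - exp(-4λr) - 4λr·exp(-4λr) - 4λ²r²·E₁(2λr) + 16λ²r²·E₁(4λr). -/

import Mathlib

open Real MeasureTheory Set Filter Topology

noncomputable def E1 (z : ℝ) : ℝ := ∫ t in Set.Ioi z, Real.exp (-t) / t

lemma f_meas : Measurable (fun t : ℝ => Real.exp (-t) / t) :=
  (Real.measurable_exp.comp measurable_neg).div measurable_id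

lemma f_int {c : ℝ} (hc : 0 < c) :
    IntegrableOn (fun t => Real.exp (-t) / t) (Set.Ioi c) := by
  have hg : IntegrableOn (fun t => Real.exp (-1 * t) * (1/c)) (Set.Ioi c) :=
    (exp_neg_integrableOn_Ioi c one_pos).mul_const _
  refine Integrable.mono' hg (f_meas.aestronglyMeasurable) ?_
  filter_upwards [ae_restrict_mem measurableSet_Ioi] with t ht
  have htc : c < t := ht
  have ht0 : 0 < t := hc.trans htc
  rw [Real.norm_eq_abs, abs_of_nonneg (by positivity)]
  rw [div_le_iff₀ ht0]
  have : Real.exp (-1*t) * (1/c) * t = Real.exp (-t) * (t / c) := by ring_nf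
  rw [this]
  nlinarith [Real.exp_pos (-t), (one_le_div hc).2 htc.le, Real.exp_pos (-t)]

lemma E1_nonneg {z : ℝ} (hz : 0 < z) : 0 ≤ E1 z := by
  apply setIntegral_nonneg measurableSet_Ioi
  intro t ht
  have : 0 < t := hz.trans ht
  positivity

lemma E1_le {z : ℝ} (hz : 0 < z) : E1 z ≤ Real.exp (-z) / z := by
  have h1 : E1 z ≤ ∫ t in Set.Ioi z, Real.exp (-t) / z := by
    apply setIntegral_mono_on (f_int hz) ((exp_neg_integrableOn_Ioi z one_pos).congr_fun
      (fun t _ => by norm_num) measurableSet_Ioi |>.div_const z) measurableSet_Ioi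
    intro t ht
    exact div_le_div_of_nonneg_left (Real.exp_pos _).le hz ht.le
  calc E1 z ≤ ∫ t in Set.Ioi z, Real.exp (-t) / z := h1
    _ = (∫ t in Set.Ioi z, Real.exp (-t)) / z := by rw [integral_div]
    _ = Real.exp (-z) / z := by rw [integral_exp_neg_Ioi]

lemma E1_split {a b : ℝ} (ha : 0 < a) (hab : a ≤ b) :
    E1 a = (∫ t in a..b, Real.exp (-t) / t) + E1 b := by
  have hb : 0 < b := ha.trans_le hab
  rw [intervalIntegral.integral_of_le hab]
  unfold E1
  rw [← Set.Ioc_union_Ioi_eq_Ioi hab,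
    setIntegral_union Set.Ioc_disjoint_Ioi_same measurableSet_Ioi
      ((f_int ha).mono_set Set.Ioc_subset_Ioi_self) (f_int hb)]

lemma E1_hasDerivAt {z : ℝ} (hz : 0 < z) :
    HasDerivAt E1 (-(Real.exp (-z) / z)) z := by
  set c := z/2 with hc
  have hc0 : 0 < c := by positivity
  have heq : ∀ u ∈ Set.Ioi c, E1 u = E1 c - ∫ t in c..u, Real.exp (-t) / t := by
    intro u hu
    have hu' : c < u := hu
    rcases le_total c u with h | h
    · rw [E1_split hc0 h]; ring
    · linarith
  have hd : HasDerivAt (fun u => E1 c - ∫ t in c..u, Real.exp (-t) / t)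
      (-(Real.exp (-z) / z)) z := by
    have hint : IntervalIntegrable (fun t => Real.exp (-t) / t) volume c z :=
      (intervalIntegrable_iff_integrableOn_Ioc_of_le (by linarith)).2
        ((f_int hc0).mono_set Set.Ioc_subset_Ioi_self)
    have hca : ContinuousAt (fun t => Real.exp (-t) / t) z :=
      ((Real.continuous_exp.comp continuous_neg).continuousAt).div continuousAt_id hz.ne'
    have := intervalIntegral.integral_hasDerivAt_right hint
      (f_meas.stronglyMeasurable.stronglyMeasurableAtFilter) hca
    have h2 := (hasDerivAt_const z (E1 c)).sub this
    rw [zero_sub] at h2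
    exact h2
  exact hd.congr_of_eventuallyEq <| by
    filter_upwards [isOpen_Ioi.mem_nhds (show c < z by linarith)] with u hu
    exact heq u hu

lemma tendsto_quad_exp (a b d c e : ℝ) (hc : 0 < c) :
    Tendsto (fun x => (a*x^2+b*x+d) * Real.exp (-(c*x+e))) atTop (𝓝 0) := by
  have h : ∀ n : ℕ, Tendsto (fun x : ℝ => (c*x)^n * Real.exp (-(c*x))) atTop (𝓝 0) := by
    intro n
    exact (tendsto_pow_mul_exp_neg_atTop_nhds_zero n).comp (tendsto_id.const_mul_atTop hc)
  have key : Tendsto (fun x : ℝ => Real.exp (-e) * (a/c^2 * ((c*x)^2 * Real.exp (-(c*x)))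
      + (b/c * ((c*x)^1 * Real.exp (-(c*x))) + d * ((c*x)^0 * Real.exp (-(c*x))))))
      atTop (𝓝 (Real.exp (-e) * (a/c^2 * 0 + (b/c * 0 + d * 0)))) :=
    tendsto_const_nhds.mul (((h 2).const_mul _).add (((h 1).const_mul _).add ((h 0).const_mul _)))
  simp only [mul_zero, add_zero, zero_add] at key
  refine key.congr fun x => ?_
  rw [show -(c*x+e) = -(c*x) + -e by ring, Real.exp_add]
  field_simp
  ring

lemma tendsto_quad_E1 (a b d c e : ℝ) (hc : 0 < c) :
    Tendsto (fun x => (a*x^2+b*x+d) * E1 (c*x+e)) atTop (𝓝 0) := by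
  refine squeeze_zero_norm' (a := fun x => (|a| * x^2+|b| * x+|d|) * Real.exp (-(c*x+e))) ?_
    (tendsto_quad_exp _ _ _ _ _ hc)
  have h1 : ∀ᶠ x : ℝ in atTop, 1 ≤ c*x+e := by
    have := tendsto_atTop.1 ((tendsto_id (α := ℝ)).const_mul_atTop hc
      |>.atTop_add tendsto_const_nhds (C := e))
    exact this 1
  filter_upwards [h1, eventually_ge_atTop (0:ℝ)] with x hx1 hx0
  have hpos : (0:ℝ) < c*x+e := by linarith
  have hE0 : 0 ≤ E1 (c*x+e) := E1_nonneg hpos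
  have hEle : E1 (c*x+e) ≤ Real.exp (-(c*x+e)) := by
    calc E1 (c*x+e) ≤ Real.exp (-(c*x+e)) / (c*x+e) := E1_le hpos
      _ ≤ Real.exp (-(c*x+e)) / 1 := by
          apply div_le_div_of_nonneg_left (Real.exp_pos _).le one_pos hx1
      _ = _ := by rw [div_one]
  rw [Real.norm_eq_abs, abs_mul, abs_of_nonneg hE0]
  have habs : |a*x^2+b*x+d| ≤ |a| * x^2+|b| * x+|d| := by
    calc |a*x^2+b*x+d| ≤ |a*x^2+b*x| + |d| := abs_add_le _ _
      _ ≤ |a*x^2| + |b*x| + |d| := by linarith [abs_add_le (a*x^2) (b*x)]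
      _ = |a| * x^2+|b| * x+|d| := by
          rw [abs_mul, abs_mul, abs_of_nonneg (by positivity : (0:ℝ) ≤ x^2), abs_of_nonneg hx0]
  have hq0 : (0:ℝ) ≤ |a| * x^2+|b| * x+|d| := by positivity
  exact mul_le_mul habs hEle hE0 hq0

lemma inner_eq (lam r : ℝ) (hlam : 0 < lam) (hr : 0 < r) {x : ℝ} (hx : r ≤ x) :
    (∫ r1 in (0:ℝ)..r, ((r + r1) / (r1 + x)) * (8 * lam ^ 2 * Real.exp (-2 * lam * (r1 + x))))
    = 4*lam*Real.exp (-2*lam*x) - 4*lam*Real.exp (-2*lam*(r+x))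
      + 8*lam^2*(r-x)*E1 (2*lam*x) - 8*lam^2*(r-x)*E1 (2*lam*(r+x)) := by
  have hx0 : 0 < x := lt_of_lt_of_le hr hx
  have key := intervalIntegral.integral_eq_sub_of_hasDerivAt
    (f := fun t => -4*lam*Real.exp (-2*lam*(t+x)) - 8*lam^2*(r-x)*E1 (2*lam*(t+x)))
    (f' := fun t => ((r + t) / (t + x)) * (8 * lam ^ 2 * Real.exp (-2 * lam * (t + x))))
    (a := 0) (b := r) ?_ ?_
  · rw [key]
    rw [show (0:ℝ) + x = x by ring]
    ring_nf
  · intro t ht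
    rw [Set.uIcc_of_le hr.le] at ht
    have htx : 0 < t + x := by have := ht.1; linarith
    have harg : 0 < 2*lam*(t+x) := by positivity
    have haff : HasDerivAt (fun t : ℝ => 2*lam*(t+x)) (2*lam) t := by
      simpa using ((hasDerivAt_id t).add_const x).const_mul (2*lam)
    have hE : HasDerivAt (fun t : ℝ => E1 (2*lam*(t+x)))
        (-(Real.exp (-(2*lam*(t+x))) / (2*lam*(t+x))) * (2*lam)) t :=
      by have h := (E1_hasDerivAt harg).comp t haff; exact h
    have haff2 : HasDerivAt (fun t : ℝ => -2*lam*(t+x)) (-2*lam) t := by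
      simpa using ((hasDerivAt_id t).add_const x).const_mul (-2*lam)
    have hexp : HasDerivAt (fun t : ℝ => Real.exp (-2*lam*(t+x)))
        (Real.exp (-2*lam*(t+x)) * (-2*lam)) t := haff2.exp
    have := (hexp.const_mul (-4*lam)).sub (hE.const_mul (8*lam^2*(r-x)))
    convert this using 1
    · rfl
    simp only [neg_mul]
    field_simp
    ring
  · apply ContinuousOn.intervalIntegrable
    rw [Set.uIcc_of_le hr.le]
    apply ContinuousOn.mul
    · apply ContinuousOn.div
      · fun_prop
      · fun_prop
      · intro t ht
        have := ht.1; intro h; linarith [show (0:ℝ) < t + x by linarith]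
    · fun_prop

noncomputable def Gfun (lam r : ℝ) (x : ℝ) : ℝ :=
  -2*Real.exp (-2*lam*x) + 2*Real.exp (-2*lam*(r+x))
  + 4*lam^2*(2*r*x - x^2)*E1 (2*lam*x) + Real.exp (-2*lam*x)*(1-4*lam*r+2*lam*x)
  + 4*lam^2*(x-3*r)*(x+r)*E1 (2*lam*(r+x)) + Real.exp (-2*lam*(r+x))*(-1+6*lam*r-2*lam*x)

lemma G_hasDerivAt (lam r : ℝ) (hlam : 0 < lam) (hr : 0 < r) {x : ℝ} (hx : r ≤ x) :
    HasDerivAt (Gfun lam r)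
      (4*lam*Real.exp (-2*lam*x) - 4*lam*Real.exp (-2*lam*(r+x))
        + 8*lam^2*(r-x)*E1 (2*lam*x) - 8*lam^2*(r-x)*E1 (2*lam*(r+x))) x := by
  have hx0 : 0 < x := lt_of_lt_of_le hr hx
  have hrx : 0 < r + x := by linarith
  have harg1 : 0 < 2*lam*x := by positivity
  have harg2 : 0 < 2*lam*(r+x) := by positivity
  have haff1 : HasDerivAt (fun y : ℝ => 2*lam*y) (2*lam) x := by
    simpa using (hasDerivAt_id x).const_mul (2*lam)
  have haff2 : HasDerivAt (fun y : ℝ => 2*lam*(r+y)) (2*lam) x := by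
    simpa using ((hasDerivAt_id x).const_add r).const_mul (2*lam)
  have haff1' : HasDerivAt (fun y : ℝ => -2*lam*y) (-2*lam) x := by
    simpa using (hasDerivAt_id x).const_mul (-2*lam)
  have haff2' : HasDerivAt (fun y : ℝ => -2*lam*(r+y)) (-2*lam) x := by
    simpa using ((hasDerivAt_id x).const_add r).const_mul (-2*lam)
  have hexp1 : HasDerivAt (fun y : ℝ => Real.exp (-2*lam*y))
      (Real.exp (-2*lam*x) * (-2*lam)) x := haff1'.exp
  have hexp2 : HasDerivAt (fun y : ℝ => Real.exp (-2*lam*(r+y)))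
      (Real.exp (-2*lam*(r+x)) * (-2*lam)) x := haff2'.exp
  have hE1a : HasDerivAt (fun y : ℝ => E1 (2*lam*y))
      (-(Real.exp (-(2*lam*x)) / (2*lam*x)) * (2*lam)) x := (E1_hasDerivAt harg1).comp x haff1
  have hE1b : HasDerivAt (fun y : ℝ => E1 (2*lam*(r+y)))
      (-(Real.exp (-(2*lam*(r+x))) / (2*lam*(r+x))) * (2*lam)) x :=
    by have h := (E1_hasDerivAt harg2).comp x haff2; exact h
  have hp1 : HasDerivAt (fun y : ℝ => 4*lam^2*(2*r*y - y^2)) (4*lam^2*(2*r - 2*x)) x := by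
    have := (((hasDerivAt_id x).const_mul (2*r)).sub (hasDerivAt_pow 2 x)).const_mul (4*lam^2)
    simpa using this
  have hpA : HasDerivAt (fun y : ℝ => 4*lam^2*(y-3*r)) (4*lam^2) x := by
    simpa using ((hasDerivAt_id x).sub_const (3*r)).const_mul (4*lam^2)
  have hpB : HasDerivAt (fun y : ℝ => y + r) 1 x := (hasDerivAt_id x).add_const r
  have hq1 : HasDerivAt (fun y : ℝ => 1-4*lam*r+2*lam*y) (2*lam) x := haff1.const_add (1-4*lam*r)
  have hq2 : HasDerivAt (fun y : ℝ => -1+6*lam*r-2*lam*y) (-(2*lam)) x :=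
    HasDerivAt.const_sub (-1+6*lam*r) haff1
  have total := (((((hexp1.const_mul (-2)).add (hexp2.const_mul 2)).add
      (((hp1.mul hE1a)))).add (hexp1.mul hq1)).add
      (((hpA.mul hpB).mul hE1b))).add (hexp2.mul hq2)
  unfold Gfun
  convert total using 1
  · rfl
  · rfl
  · rfl
  simp only [neg_mul, Pi.mul_apply]
  field_simp
  ring

theorem stmt8 (lam r : ℝ) (hlam : 0 < lam) (hr : 0 < r) :
    (∫ r2 in Set.Ioi r, ∫ r1 in (0:ℝ)..r,
        ((r + r1) / (r1 + r2)) * (8 * lam ^ 2 * Real.exp (-2 * lam * (r1 + r2))))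
      = Real.exp (-2 * lam * r) + 2 * lam * r * Real.exp (-2 * lam * r)
        - Real.exp (-4 * lam * r) - 4 * lam * r * Real.exp (-4 * lam * r)
        - 4 * lam ^ 2 * r ^ 2 * E1 (2 * lam * r)
        + 16 * lam ^ 2 * r ^ 2 * E1 (4 * lam * r) := by
  have hderiv : ∀ x ∈ Set.Ici r, HasDerivAt (Gfun lam r)
      ((fun r2 => ∫ r1 in (0:ℝ)..r,
        ((r + r1) / (r1 + r2)) * (8 * lam ^ 2 * Real.exp (-2 * lam * (r1 + r2)))) x) x := by
    intro x hx
    have hx' : r ≤ x := hx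
    simp only
    rw [inner_eq lam r hlam hr hx']
    exact G_hasDerivAt lam r hlam hr hx'
  have hpos : ∀ x ∈ Set.Ioi r, 0 ≤ (fun r2 => ∫ r1 in (0:ℝ)..r,
      ((r + r1) / (r1 + r2)) * (8 * lam ^ 2 * Real.exp (-2 * lam * (r1 + r2)))) x := by
    intro x hx
    have hx' : r < x := hx
    apply intervalIntegral.integral_nonneg hr.le
    intro u hu
    have h1 : 0 < u + x := by linarith [hu.1]
    have h2 : 0 ≤ r + u := by linarith [hu.1]
    positivity
  have htend : Tendsto (Gfun lam r) atTop (𝓝 0) := by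
    have hc : (0:ℝ) < 2*lam := by positivity
    have h1 := tendsto_quad_exp 0 0 (-2) (2*lam) 0 hc
    have h2 := tendsto_quad_exp 0 0 2 (2*lam) (2*lam*r) hc
    have h3 := tendsto_quad_E1 (-4*lam^2) (8*lam^2*r) 0 (2*lam) 0 hc
    have h4 := tendsto_quad_exp 0 (2*lam) (1-4*lam*r) (2*lam) 0 hc
    have h5 := tendsto_quad_E1 (4*lam^2) (-8*lam^2*r) (-12*lam^2*r^2) (2*lam) (2*lam*r) hc
    have h6 := tendsto_quad_exp 0 (-2*lam) (-1+6*lam*r) (2*lam) (2*lam*r) hc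
    have H := ((((h1.add h2).add h3).add h4).add h5).add h6
    simp only [add_zero] at H
    refine H.congr fun x => ?_
    unfold Gfun
    rw [show -(2*lam*x+2*lam*r) = -2*lam*(r+x) by ring,
      show (2*lam*x+2*lam*r : ℝ) = 2*lam*(r+x) by ring,
      show -(2*lam*x) = -2*lam*x by ring]
    ring
  have key : (∫ r2 in Set.Ioi r, ∫ r1 in (0:ℝ)..r,
      ((r + r1) / (r1 + r2)) * (8 * lam ^ 2 * Real.exp (-2 * lam * (r1 + r2))))
      = 0 - Gfun lam r r :=
    integral_Ioi_of_hasDerivAt_of_nonneg' hderiv hpos htend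
  rw [key]
  unfold Gfun
  rw [show 2*lam*(r+r) = 4*lam*r by ring, show -2*lam*(r+r) = -4*lam*r by ring]
  ring
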